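/- Let b̂ minimize f(b) = l(b) + Σ_{i=1}^p λ_i |b|_{(i)} with l convex and differentiable and λ_1 ≥ ... ≥ λ_p ≥ 0. If |b̂_j| > |b̂_k|, then |U_j(b̂)| ≥ |U_k(b̂)|, where U(b) = −∇l(b). -/

import Mathlib

/-- The `i`-th largest absolute value of the coordinates of `b : Fin p → ℝ`
(0-indexed). -/
noncomputable def sortedAbs {p : ℕ} (b : Fin p → ℝ) (i : Fin p) : ℝ :=
  |b (Tuple.sort (fun j => |b j|) i.rev)|

/-- `|b|₍ᵢ₎` with 1-based indexing `i ∈ {1,…,p}` (and `0` outside this range). -/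
noncomputable def sAbs {p : ℕ} (b : Fin p → ℝ) (i : ℕ) : ℝ :=
  if h : 1 ≤ i ∧ i ≤ p then sortedAbs b ⟨i - 1, by omega⟩ else 0

private lemma sAbs_eq {p : ℕ} (b : Fin p → ℝ) (i : ℕ) (h1 : 1 ≤ i) (h2 : i ≤ p) :
    sAbs b i = |b (Tuple.sort (fun j => |b j|) ⟨p - i, by omega⟩)| := by
  have hrev : ∀ hh : i - 1 < p, (⟨i - 1, hh⟩ : Fin p).rev = ⟨p - i, by omega⟩ := by
    intro hh
    ext
    rw [Fin.val_rev]
    show p - (i - 1 + 1) = p - i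
    omega
  rw [sAbs, dif_pos ⟨h1, h2⟩, sortedAbs, hrev]

private lemma sum_sAbs_eq {p : ℕ} (lam : ℕ → ℝ) (b : Fin p → ℝ) :
    ∑ i ∈ Finset.Icc 1 p, lam i * sAbs b i
      = ∑ m : Fin p, lam (p - (m : ℕ)) * |b (Tuple.sort (fun j => |b j|) m)| := by
  refine Finset.sum_bij' (fun i hi => (⟨p - i, by
      simp only [Finset.mem_Icc] at hi; omega⟩ : Fin p))
    (fun m _ => p - (m : ℕ)) ?_ ?_ ?_ ?_ ?_
  · intro a ha; exact Finset.mem_univ _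
  · intro m _; have := m.isLt; simp only [Finset.mem_Icc]; omega
  · intro a ha; simp only [Finset.mem_Icc] at ha
    show p - (p - a) = a; omega
  · intro m _; have := m.isLt; ext
    show p - (p - (m : ℕ)) = (m : ℕ); omega
  · intro a ha
    simp only [Finset.mem_Icc] at ha
    rw [sAbs_eq b a ha.1 ha.2]
    have hval : p - (p - a) = a := by omega
    show lam a * _ = lam (p - (p - a)) * _
    rw [hval]

private lemma perm_sum_le {p : ℕ} (lam : ℕ → ℝ)
    (hmono : ∀ i j, 1 ≤ i → i ≤ j → j ≤ p → lam j ≤ lam i)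
    (b : Fin p → ℝ) (π : Equiv.Perm (Fin p)) :
    ∑ m : Fin p, lam (p - (m : ℕ)) * |b (π m)|
      ≤ ∑ i ∈ Finset.Icc 1 p, lam i * sAbs b i := by
  rw [sum_sAbs_eq]
  set σ := Tuple.sort (fun j : Fin p => |b j|) with hσ
  have hw : Monotone (fun m : Fin p => lam (p - (m : ℕ))) := by
    intro m m' hmm
    have h1 : (m : ℕ) ≤ (m' : ℕ) := hmm
    have h2 := m'.isLt
    exact hmono (p - m') (p - m) (by omega) (by omega) (by omega)
  have hg : Monotone ((fun j : Fin p => |b j|) ∘ ⇑σ) := Tuple.monotone_sort _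
  have hmv : Monovary (fun m : Fin p => lam (p - (m : ℕ)))
      ((fun j : Fin p => |b j|) ∘ ⇑σ) := hw.monovary hg
  have h := hmv.sum_mul_comp_perm_le_sum_mul (σ := π.trans σ.symm)
  simpa using h

private lemma sum_le_of_perturb {p : ℕ} (lam : ℕ → ℝ)
    (hmono : ∀ i j, 1 ≤ i → i ≤ j → j ≤ p → lam j ≤ lam i)
    (hnonneg : ∀ i, 1 ≤ i → i ≤ p → 0 ≤ lam i)
    (bhat b' : Fin p → ℝ) (j k : Fin p) (hjkne : j ≠ k) (ε : ℝ) (hε : 0 < ε)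
    (hsame : ∀ i, i ≠ j → i ≠ k → b' i = bhat i)
    (hj : |b' j| = |bhat j| - ε)
    (hk : |b' k| ≤ |bhat k| + ε)
    (hlt : |b' k| < |b' j|) :
    ∑ i ∈ Finset.Icc 1 p, lam i * sAbs b' i
      ≤ ∑ i ∈ Finset.Icc 1 p, lam i * sAbs bhat i := by
  set σ' := Tuple.sort (fun i : Fin p => |b' i|) with hσ'
  set w : Fin p → ℝ := fun m => lam (p - (m : ℕ)) with hwdef
  have hwmono : Monotone w := by
    intro m m' hmm
    have h1 : (m : ℕ) ≤ (m' : ℕ) := hmm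
    have h2 := m'.isLt
    exact hmono (p - m') (p - m) (by omega) (by omega) (by omega)
  have hwnn : ∀ m : Fin p, 0 ≤ w m := fun m =>
    hnonneg _ (by have := m.isLt; omega) (by omega)
  have h2 : ∑ m : Fin p, w m * |bhat (σ' m)|
      ≤ ∑ i ∈ Finset.Icc 1 p, lam i * sAbs bhat i :=
    perm_sum_le lam hmono bhat σ'
  rw [sum_sAbs_eq]
  refine le_trans ?_ h2
  rw [← sub_nonpos, ← Finset.sum_sub_distrib]
  set mj := σ'.symm j with hmj
  set mk := σ'.symm k with hmk
  have hσmj : σ' mj = j := Equiv.apply_symm_apply _ _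
  have hσmk : σ' mk = k := Equiv.apply_symm_apply _ _
  have hmjmk : mk ≠ mj := by
    intro h
    exact hjkne (by rw [← hσmj, ← hσmk, h])
  have hsupp : ∀ x ∈ (Finset.univ : Finset (Fin p)),
      x ∉ ({mk, mj} : Finset (Fin p)) →
      w x * |b' (σ' x)| - w x * |bhat (σ' x)| = 0 := by
    intro x _ hx
    simp only [Finset.mem_insert, Finset.mem_singleton, not_or] at hx
    have hxk : σ' x ≠ k := fun h => hx.1 (by rw [hmk, ← h, Equiv.symm_apply_apply])
    have hxj : σ' x ≠ j := fun h => hx.2 (by rw [hmj, ← h, Equiv.symm_apply_apply])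
    rw [hsame _ hxj hxk]
    ring
  rw [← Finset.sum_subset (Finset.subset_univ ({mk, mj} : Finset (Fin p))) hsupp]
  rw [Finset.sum_pair hmjmk]
  rw [hσmj, hσmk]
  have hle : mk ≤ mj := by
    by_contra h
    push_neg at h
    have := Tuple.monotone_sort (fun i : Fin p => |b' i|) (le_of_lt h)
    simp only [Function.comp_apply, hσmj, hσmk] at this
    exact absurd this (not_le.mpr (show |b' (σ' mk)| < |b' (σ' mj)| by rw [hσmj, hσmk]; exact hlt))
  have hwle : w mk ≤ w mj := hwmono hle
  have hwk := hwnn mk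
  nlinarith [hwnn mj]

/-- at a minimizer `b̂` of `l(b) + ∑ λᵢ |b|₍ᵢ₎`, if
`|b̂_j| > |b̂_k|` then `|U_j(b̂)| ≥ |U_k(b̂)|`, where `U(b) = -∇l(b)`. -/
theorem slope_score_monotone {p : ℕ} (l : (Fin p → ℝ) → ℝ)
    (hconv : ConvexOn ℝ Set.univ l) (hdiff : Differentiable ℝ l)
    (lam : ℕ → ℝ)
    (hmono : ∀ i j, 1 ≤ i → i ≤ j → j ≤ p → lam j ≤ lam i)
    (hnonneg : ∀ i, 1 ≤ i → i ≤ p → 0 ≤ lam i)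
    (bhat : Fin p → ℝ)
    (hmin : ∀ b, l bhat + ∑ i ∈ Finset.Icc 1 p, lam i * sAbs bhat i ≤
                 l b + ∑ i ∈ Finset.Icc 1 p, lam i * sAbs b i)
    (U : Fin p → ℝ) (hU : ∀ i, U i = -(fderiv ℝ l bhat (Pi.single i 1)))
    (j k : Fin p) (hjk : |bhat k| < |bhat j|) :
    |U k| ≤ |U j| := by
  classical
  have hjkne : j ≠ k := by
    intro h; rw [h] at hjk; exact lt_irrefl _ hjk
  set s : ℝ := if 0 ≤ bhat j then 1 else -1 with hs
  have hsbj : s * bhat j = |bhat j| := by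
    rw [hs]; split_ifs with h
    · rw [abs_of_nonneg h]; ring
    · rw [abs_of_neg (lt_of_not_ge h)]; ring
  have hs1 : s = 1 ∨ s = -1 := by
    rw [hs]; split_ifs <;> simp
  set ε₀ : ℝ := (|bhat j| - |bhat k|) / 2 with hε₀
  have hε₀pos : 0 < ε₀ := by rw [hε₀]; linarith
  have habsk : 0 ≤ |bhat k| := abs_nonneg _
  -- main directional derivative claim
  have key : ∀ c : ℝ, c = 1 ∨ c = -1 → c * U k ≤ s * U j := by
    intro c hc
    set v : Fin p → ℝ := fun i => if i = j then -s else if i = k then c else 0 with hv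
    -- For 0 < ε < ε₀, the perturbed point does not decrease l
    have hl : ∀ ε : ℝ, 0 < ε → ε < ε₀ → l bhat ≤ l (bhat + ε • v) := by
      intro ε hεpos hεlt
      set b' : Fin p → ℝ := bhat + ε • v with hb'
      have hb'j : b' j = bhat j - ε * s := by
        simp [hb', hv]; ring
      have hb'k : b' k = bhat k + ε * c := by
        simp [hb', hv, hjkne, Ne.symm hjkne]
      have hsame : ∀ i, i ≠ j → i ≠ k → b' i = bhat i := by
        intro i hij hik; simp [hb', hv, hij, hik]
      have hεsmall : ε < |bhat j| := by
        rw [hε₀] at hεlt; linarith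
      have habj : |b' j| = |bhat j| - ε := by
        rw [hb'j]
        rcases hs1 with h | h <;> rw [h]
        · have h0 : 0 ≤ bhat j := by
            by_contra hneg
            rw [hs, if_neg hneg] at h; norm_num at h
          rw [abs_of_nonneg h0] at hεsmall ⊢
          rw [abs_of_nonneg (by linarith)]; ring
        · have h0 : ¬ 0 ≤ bhat j := by
            intro hpos
            rw [hs, if_pos hpos] at h; norm_num at h
          push_neg at h0
          rw [abs_of_neg h0] at hεsmall ⊢
          rw [abs_of_nonpos (by linarith)]; ring
      have habk : |b' k| ≤ |bhat k| + ε := by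
        rw [hb'k]
        calc |bhat k + ε * c| ≤ |bhat k| + |ε * c| := abs_add_le _ _
          _ = |bhat k| + ε := by
              rcases hc with h | h <;> rw [h] <;>
                simp [abs_of_pos hεpos, abs_of_nonneg (le_of_lt hεpos)]
      have hblt : |b' k| < |b' j| := by
        rw [habj]
        have : |bhat k| + ε < |bhat j| - ε := by rw [hε₀] at hεlt; linarith
        linarith [habk]
      have hsum := sum_le_of_perturb lam hmono hnonneg bhat b' j k hjkne ε hεpos
        hsame habj habk hblt
      have := hmin b'
      linarith
    -- derivative of t ↦ l (bhat + t • v) at 0 is nonneg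
    set d : ℝ := fderiv ℝ l bhat v with hd
    have hγ : HasDerivAt (fun t : ℝ => bhat + t • v) v 0 := by
      simpa using ((hasDerivAt_id (0:ℝ)).smul_const v).const_add bhat
    have h0 : bhat + (0:ℝ) • v = bhat := by simp
    have hφ : HasDerivAt (fun t : ℝ => l (bhat + t • v)) d 0 := by
      have h1 : HasFDerivAt l (fderiv ℝ l bhat) (bhat + (0:ℝ) • v) := by
        rw [h0]; exact (hdiff bhat).hasFDerivAt
      exact h1.comp_hasDerivAt 0 hγ
    have hslope : Filter.Tendsto (slope (fun t : ℝ => l (bhat + t • v)) 0)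
        (nhdsWithin 0 {(0:ℝ)}ᶜ) (nhds d) := hasDerivAt_iff_tendsto_slope.mp hφ
    have hslope' : Filter.Tendsto (slope (fun t : ℝ => l (bhat + t • v)) 0)
        (nhdsWithin 0 (Set.Ioi 0)) (nhds d) :=
      hslope.mono_left (nhdsWithin_mono _ (fun x hx => ne_of_gt hx))
    have hdnn : 0 ≤ d := by
      refine ge_of_tendsto hslope' ?_
      have hmem : Set.Ioo (0:ℝ) ε₀ ∈ nhdsWithin (0:ℝ) (Set.Ioi 0) :=
        Ioo_mem_nhdsGT_of_mem ⟨le_refl 0, hε₀pos⟩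
      filter_upwards [hmem] with t ht
      rw [slope_def_field, sub_zero]
      have hlt := hl t ht.1 ht.2
      apply div_nonneg _ (le_of_lt ht.1)
      rw [h0]
      linarith
    -- compute d
    have hv' : v = (-s) • (Pi.single j 1 : Fin p → ℝ) + c • (Pi.single k 1 : Fin p → ℝ) := by
      funext i
      simp only [Pi.add_apply, Pi.smul_apply, Pi.single_apply, smul_eq_mul, hv]
      by_cases hij : i = j
      · subst hij; simp [hjkne]
      · by_cases hik : i = k <;> simp [hij, hik, Ne.symm hjkne]
    have hdval : d = s * U j - c * U k := by
      rw [hd, hv', map_add, map_smul, map_smul, hU j, hU k] at *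
      simp only [smul_eq_mul] at hdnn ⊢
      ring
    rw [hdval] at hdnn
    linarith
  have h1 := key 1 (Or.inl rfl)
  have h2 := key (-1) (Or.inr rfl)
  have habs : |U k| ≤ s * U j := abs_le.mpr ⟨by linarith, by linarith⟩
  have hsabs : |s| = 1 := by rcases hs1 with h | h <;> simp [h]
  calc |U k| ≤ s * U j := habs
    _ ≤ |s * U j| := le_abs_self _
    _ = |U j| := by rw [abs_mul, hsabs, one_mul]
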